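/- For every n ≥ 4, the Artin–Brieskorn braid group of type Dₙ is isomorphic to the group defined by the presentation with three generators σ₁, σ, ρ and relations: σ₁σⁱσ₁σ⁻ⁱ = σⁱσ₁σ⁻ⁱσ₁ for 2 ≤ i ≤ n/2; σⁿ = (σσ₁)ⁿ⁻¹; ρσⁱσ₁σ⁻ⁱ = σⁱσ₁σ⁻ⁱρ for i = 0, 2, 3, …, n−2; and ρσσ₁σ⁻¹ρ = σσ₁σ⁻¹ρσσ₁σ⁻¹; an isomorphism is given by σ₁ ↦ σ₁, ρ ↦ ρ, and σ ↦ σ₁σ₂⋯σₙ₋₁. -/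

import Mathlib

/-!
STATEMENT 3: For every n ≥ 4, the Artin–Brieskorn braid group of type Dₙ is
isomorphic to the group presented by three generators σ₁, σ, ρ with relations
σ₁σⁱσ₁σ⁻ⁱ = σⁱσ₁σ⁻ⁱσ₁ (2 ≤ i ≤ n/2), σⁿ = (σσ₁)ⁿ⁻¹,
ρσⁱσ₁σ⁻ⁱ = σⁱσ₁σ⁻ⁱρ (i = 0, 2, 3, …, n−2), ρσσ₁σ⁻¹ρ = σσ₁σ⁻¹ρσσ₁σ⁻¹,
via σ₁ ↦ σ₁, ρ ↦ ρ, σ ↦ σ₁σ₂⋯σₙ₋₁.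
-/

open FreeGroup

/-- Generators of the type `Dₙ` braid group: `σ₁, …, σ_{n-1}` (as `sig i`,
`i : Fin (n-1)`, `i` standing for `σ_{i+1}`) and `ρ`. -/
inductive DGen (n : ℕ) : Type
  | sig (i : Fin (n - 1)) : DGen n
  | rho : DGen n

open DGen in
/-- The canonical relations of the Artin–Brieskorn group of type `Dₙ`:
braid relations among the `σᵢ`, `ρσᵢ = σᵢρ` for `i = 1, 3, 4, …, n−1` and
`ρσ₂ρ = σ₂ρσ₂`. -/
def typeDRels (n : ℕ) : Set (FreeGroup (DGen n)) :=
  {r | (∃ i j : Fin (n - 1), (i.val + 1 < j.val ∨ j.val + 1 < i.val) ∧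
          r = of (sig i) * of (sig j) * (of (sig j) * of (sig i))⁻¹) ∨
       (∃ i j : Fin (n - 1), j.val = i.val + 1 ∧
          r = of (sig i) * of (sig j) * of (sig i) *
              (of (sig j) * of (sig i) * of (sig j))⁻¹) ∨
       (∃ i : Fin (n - 1), i.val ≠ 1 ∧
          r = of rho * of (sig i) * (of (sig i) * of rho)⁻¹) ∨
       (∃ h : 1 < n - 1,
          r = of rho * of (sig ⟨1, h⟩) * of rho *
              (of (sig ⟨1, h⟩) * of rho * of (sig ⟨1, h⟩))⁻¹)}

/-- The Artin–Brieskorn braid group of type `Dₙ`. -/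
def BraidGroupD (n : ℕ) : Type := PresentedGroup (typeDRels n)

noncomputable instance (n : ℕ) : Group (BraidGroupD n) :=
  inferInstanceAs (Group (PresentedGroup (typeDRels n)))

/-- The three generators of the small presentation: σ₁, σ and ρ. -/
inductive ThreeGenD : Type
  | s1 : ThreeGenD
  | s : ThreeGenD
  | r : ThreeGenD

open ThreeGenD in
/-- The relations of the three-generator presentation of the type `Dₙ` braid
group. -/
def threeGenDRels (n : ℕ) : Set (FreeGroup ThreeGenD) :=
  {x | (∃ i : ℕ, 2 ≤ i ∧ 2 * i ≤ n ∧
          x = (of s1 * (of s) ^ i * of s1 * ((of s) ^ i)⁻¹) *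
              ((of s) ^ i * of s1 * ((of s) ^ i)⁻¹ * of s1)⁻¹) ∨
       x = (of s) ^ n * (((of s) * of s1) ^ (n - 1))⁻¹ ∨
       (∃ i : ℕ, (i = 0 ∨ (2 ≤ i ∧ i ≤ n - 2)) ∧
          x = (of r * (of s) ^ i * of s1 * ((of s) ^ i)⁻¹) *
              ((of s) ^ i * of s1 * ((of s) ^ i)⁻¹ * of r)⁻¹) ∨
       x = (of r * (of s * of s1 * (of s)⁻¹) * of r) *
           ((of s * of s1 * (of s)⁻¹) * of r * (of s * of s1 * (of s)⁻¹))⁻¹}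


namespace TypeDAux

variable {G : Type*} [Group G]

/-! ### Generic computations with `tE s a i = s^i a s^{-i}` -/

def tE (s a : G) (i : ℤ) : G := s ^ i * a * s ^ (-i)

def chain (s a : G) (k : ℤ) : ℕ → G
  | 0 => 1
  | m + 1 => chain s a k m * tE s a (k + m)

lemma tE_zero (s a : G) : tE s a 0 = a := by simp [tE]

lemma tE_natCast (s a : G) (i : ℕ) : tE s a (i : ℤ) = s ^ i * a * (s ^ i)⁻¹ := by
  simp [tE, zpow_natCast]

lemma tE_shift (s a : G) (k j : ℤ) : tE s a (k + j) = s ^ j * tE s a k * (s ^ j)⁻¹ := by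
  simp only [tE]; group

lemma chain_shift (s a : G) (k j : ℤ) :
    ∀ m : ℕ, s ^ j * chain s a k m * (s ^ j)⁻¹ = chain s a (k + j) m
  | 0 => by simp [chain]
  | m + 1 => by
    have h := tE_shift s a (k + m) j
    calc s ^ j * chain s a k (m + 1) * (s ^ j)⁻¹
        = (s ^ j * chain s a k m * (s ^ j)⁻¹) * (s ^ j * tE s a (k + m) * (s ^ j)⁻¹) := by
          simp only [chain]; group
      _ = chain s a (k + j) m * tE s a (k + m + j) := by rw [chain_shift s a k j m, ← h]
      _ = chain s a (k + j) (m + 1) := by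
          show _ = chain s a (k + j) m * tE s a (k + j + m)
          rw [show k + (m : ℤ) + j = k + j + m by ring]

lemma chain_append (s a : G) (k : ℤ) (p : ℕ) :
    ∀ q : ℕ, chain s a k (p + q) = chain s a k p * chain s a (k + p) q
  | 0 => by simp [chain]
  | q + 1 => by
    show chain s a k ((p + q) + 1) = _
    calc chain s a k (p + q) * tE s a (k + (p + q : ℕ))
        = chain s a k p * chain s a (k + p) q * tE s a (k + p + q) := by
          rw [chain_append s a k p q]; push_cast; rw [add_assoc]
      _ = chain s a k p * chain s a (k + p) (q + 1) := by
          show _ = chain s a k p * (chain s a (k + p) q * tE s a (k + p + q))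
          group

lemma chain_comm (s a x : G) (k : ℤ) :
    ∀ m : ℕ, (∀ m' < m, x * tE s a (k + m') = tE s a (k + m') * x) →
      x * chain s a k m = chain s a k m * x
  | 0, _ => by simp [chain]
  | m + 1, h => by
    have h1 := chain_comm s a x k m (fun m' hm => h m' (by omega))
    have h2 := h m (by omega)
    show x * (chain s a k m * tE s a (k + m)) = (chain s a k m * tE s a (k + m)) * x
    rw [← mul_assoc, h1, mul_assoc, h2, mul_assoc]

lemma conj_comm_aux (c x y : G) (h : x * y = y * x) :
    (c * x * c⁻¹) * (c * y * c⁻¹) = (c * y * c⁻¹) * (c * x * c⁻¹) := by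
  rw [show (c * x * c⁻¹) * (c * y * c⁻¹) = c * (x * y) * c⁻¹ by group, h]; group

section Theory1

variable (n : ℕ) (s a : G)

lemma central (hn : 1 ≤ n) (ht : s ^ n = (s * a) ^ (n - 1)) : s ^ n * a = a * s ^ n := by
  have h1 : (s * a) * s ^ n = s ^ n * (s * a) := by
    rw [ht, ← pow_succ', ← pow_succ]
  have h2 : s * (a * s ^ n) = s * (s ^ n * a) := by
    calc s * (a * s ^ n) = (s * a) * s ^ n := by group
      _ = s ^ n * (s * a) := h1
      _ = (s ^ n * s) * a := by group
      _ = (s * s ^ n) * a := by rw [← pow_succ, ← pow_succ']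
      _ = s * (s ^ n * a) := by group
  exact (mul_left_cancel h2).symm

lemma tE_per (hn : 1 ≤ n) (ht : s ^ n = (s * a) ^ (n - 1)) (i : ℤ) :
    tE s a (i + n) = tE s a i := by
  have hc : s ^ (n : ℤ) * a = a * s ^ (n : ℤ) := by
    rw [zpow_natCast]; exact central n s a hn ht
  calc tE s a (i + n)
      = s ^ i * (s ^ (n : ℤ) * a) * (s ^ (n : ℤ) * s ^ i)⁻¹ := by simp only [tE]; group
    _ = s ^ i * (a * s ^ (n : ℤ)) * (s ^ (n : ℤ) * s ^ i)⁻¹ := by rw [hc]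
    _ = tE s a i := by simp only [tE]; group

lemma commC (hc : ∀ i : ℕ, 2 ≤ i → 2 * i ≤ n → a * tE s a i = tE s a i * a)
    (k : ℤ) (d : ℕ) (h2 : 2 ≤ d) (hd : 2 * d ≤ n) :
    tE s a k * tE s a (k + d) = tE s a (k + d) * tE s a k := by
  have e1 : tE s a (k + d) = s ^ k * tE s a d * (s ^ k)⁻¹ := by
    rw [show k + (d : ℤ) = (d : ℤ) + k by ring, tE_shift]
  have e0 : tE s a k = s ^ k * a * (s ^ k)⁻¹ := by
    have h := tE_shift s a 0 k
    rw [zero_add, tE_zero] at h; exact h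
  rw [e0, e1]
  exact conj_comm_aux _ _ _ (hc d h2 hd)

lemma commCfull (hn : 4 ≤ n) (ht : s ^ n = (s * a) ^ (n - 1))
    (hc : ∀ i : ℕ, 2 ≤ i → 2 * i ≤ n → a * tE s a i = tE s a i * a)
    (k : ℤ) (d : ℕ) (h2 : 2 ≤ d) (hd : d ≤ n - 2) :
    tE s a k * tE s a (k + d) = tE s a (k + d) * tE s a k := by
  by_cases hcase : 2 * d ≤ n
  · exact commC n s a hc k d h2 hcase
  · have h2' : 2 ≤ n - d := by omega
    have hd' : 2 * (n - d) ≤ n := by omega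
    have key := commC n s a hc (k + d - n) (n - d) h2' hd'
    have e1 : k + (d : ℤ) - n + ((n - d : ℕ) : ℤ) = k := by
      rw [Nat.cast_sub (by omega : d ≤ n)]; ring
    rw [e1] at key
    have e2 : tE s a (k + d - n) = tE s a (k + d) := by
      have h := tE_per n s a (by omega) ht (k + d - n)
      rw [show k + (d : ℤ) - n + n = k + d by ring] at h
      exact h.symm
    rw [e2] at key
    exact key.symm

lemma pow_eq_chain : ∀ m : ℕ, (s * a) ^ m = chain s a 1 m * s ^ m
  | 0 => by simp [chain]
  | m + 1 => by
    have ih := pow_eq_chain m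
    have h : s ^ (m + 1) * a = tE s a (1 + (m : ℤ)) * s ^ (m + 1) := by
      rw [show (1 + (m : ℤ)) = ((m + 1 : ℕ) : ℤ) by push_cast; ring, tE_natCast]
      group
    calc (s * a) ^ (m + 1) = (s * a) ^ m * (s * a) := pow_succ _ _
      _ = chain s a 1 m * s ^ m * (s * a) := by rw [ih]
      _ = chain s a 1 m * (s ^ (m + 1) * a) := by
          rw [pow_succ]; group
      _ = chain s a 1 m * tE s a (1 + (m : ℤ)) * s ^ (m + 1) := by rw [h]; group
      _ = chain s a 1 (m + 1) * s ^ (m + 1) := rfl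

lemma s_eq_chain1 (hn : 1 ≤ n) (ht : s ^ n = (s * a) ^ (n - 1)) :
    s = chain s a 1 (n - 1) := by
  have h := pow_eq_chain s a (n - 1)
  rw [← ht] at h
  have h2 : s * s ^ (n - 1) = chain s a 1 (n - 1) * s ^ (n - 1) := by
    rw [← pow_succ', show n - 1 + 1 = n by omega]; exact h
  exact mul_right_cancel h2

lemma s_eq_chain0 (hn : 1 ≤ n) (ht : s ^ n = (s * a) ^ (n - 1)) :
    s = chain s a 0 (n - 1) := by
  have h := chain_shift s a 1 (-1) (n - 1)
  rw [← s_eq_chain1 n s a hn ht, show (1 : ℤ) + -1 = 0 by norm_num] at h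
  rw [← h]; group

lemma braid0 (hn : 4 ≤ n) (ht : s ^ n = (s * a) ^ (n - 1))
    (hc : ∀ i : ℕ, 2 ≤ i → 2 * i ≤ n → a * tE s a i = tE s a i * a) :
    tE s a 0 * tE s a 1 * tE s a 0 = tE s a 1 * tE s a 0 * tE s a 1 := by
  have hcomm : tE s a 0 * chain s a 2 (n - 3) = chain s a 2 (n - 3) * tE s a 0 := by
    refine chain_comm s a (tE s a 0) 2 (n - 3) (fun m' hm => ?_)
    have h := commCfull n s a hn ht hc 0 (2 + m') (by omega) (by omega)
    rwa [show ((0 : ℤ) + ((2 + m' : ℕ) : ℤ)) = 2 + (m' : ℤ) by push_cast; ring] at h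
  have hs : s = tE s a 0 * tE s a 1 * chain s a 2 (n - 3) := by
    have hsplit := chain_append s a 0 2 (n - 3)
    rw [show 2 + (n - 3) = n - 1 by omega, show (0 : ℤ) + ((2 : ℕ) : ℤ) = 2 by norm_num]
      at hsplit
    have h02 : chain s a 0 2 = tE s a 0 * tE s a 1 := by
      show ((1 : G) * tE s a (0 + ((0 : ℕ) : ℤ))) * tE s a (0 + ((1 : ℕ) : ℤ)) = _
      norm_num
    conv_lhs => rw [s_eq_chain0 n s a (by omega) ht]
    rw [hsplit, h02]
  set T0 := tE s a 0 with hT0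
  set T1 := tE s a 1 with hT1
  set C := chain s a 2 (n - 3) with hC2
  have h1 : T1 * s = s * T0 := by
    have h := tE_shift s a 0 1
    rw [zero_add, zpow_one] at h
    rw [hT1, hT0, h]; group
  rw [hs] at h1
  have h2 : (T0 * T1 * C) * T0 = (T0 * T1 * T0) * C := by
    rw [mul_assoc, ← hcomm]; group
  have h3 : (T1 * T0 * T1) * C = (T0 * T1 * T0) * C := by
    rw [show (T1 * T0 * T1) * C = T1 * (T0 * T1 * C) by group, h1, h2]
  exact (mul_right_cancel h3).symm

lemma braidk (hn : 4 ≤ n) (ht : s ^ n = (s * a) ^ (n - 1))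
    (hc : ∀ i : ℕ, 2 ≤ i → 2 * i ≤ n → a * tE s a i = tE s a i * a) (k : ℤ) :
    tE s a k * tE s a (k + 1) * tE s a k = tE s a (k + 1) * tE s a k * tE s a (k + 1) := by
  have e0 : tE s a k = s ^ k * tE s a 0 * (s ^ k)⁻¹ := by
    have h := tE_shift s a 0 k; rwa [zero_add] at h
  have e1 : tE s a (k + 1) = s ^ k * tE s a 1 * (s ^ k)⁻¹ := by
    have h := tE_shift s a 1 k; rwa [add_comm 1 k] at h
  rw [e0, e1,
    show (s ^ k * tE s a 1 * (s ^ k)⁻¹) * (s ^ k * tE s a 0 * (s ^ k)⁻¹) *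
        (s ^ k * tE s a 1 * (s ^ k)⁻¹) = s ^ k * (tE s a 1 * tE s a 0 * tE s a 1) * (s ^ k)⁻¹
      by group,
    ← braid0 n s a hn ht hc]
  group

end Theory1

/-! ### Generic computations with products of a sequence of generators -/

def chN (f : ℕ → G) (k : ℕ) : ℕ → G
  | 0 => 1
  | m + 1 => chN f k m * f (k + m)

lemma chN_append (f : ℕ → G) (k p : ℕ) :
    ∀ q : ℕ, chN f k (p + q) = chN f k p * chN f (k + p) q
  | 0 => by simp [chN]
  | q + 1 => by
    show chN f k ((p + q) + 1) = _
    show chN f k (p + q) * f (k + (p + q)) = _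
    rw [chN_append f k p q]
    show _ = chN f k p * (chN f (k + p) q * f ((k + p) + q))
    rw [mul_assoc, add_assoc]

lemma chN_cons (f : ℕ → G) (k m : ℕ) : chN f k (m + 1) = f k * chN f (k + 1) m := by
  have h := chN_append f k 1 m
  rw [add_comm 1 m] at h
  rw [h]
  show (1 : G) * f (k + 0) * _ = _
  norm_num

lemma chN_comm (f : ℕ → G) (x : G) (k : ℕ) :
    ∀ m : ℕ, (∀ m' < m, x * f (k + m') = f (k + m') * x) →
      x * chN f k m = chN f k m * x
  | 0, _ => by simp [chN]
  | m + 1, h => by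
    show x * (chN f k m * f (k + m)) = (chN f k m * f (k + m)) * x
    rw [← mul_assoc, chN_comm f x k m (fun m' hm => h m' (by omega)), mul_assoc,
      h m (by omega), mul_assoc]

section Theory2

variable (f : ℕ → G) (N : ℕ)

lemma Kshift (hc2 : ∀ i j : ℕ, j < N → i + 2 ≤ j → f i * f j = f j * f i)
    (hb2 : ∀ i : ℕ, i + 1 < N → f i * f (i + 1) * f i = f (i + 1) * f i * f (i + 1))
    (i : ℕ) (hi : i + 1 < N) :
    chN f 0 N * f i = f (i + 1) * chN f 0 N := by
  have hsplit : chN f 0 N = chN f 0 (i + 2) * chN f (i + 2) (N - (i + 2)) := by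
    have h := chN_append f 0 (i + 2) (N - (i + 2))
    rw [show i + 2 + (N - (i + 2)) = N by omega, zero_add] at h
    exact h
  have ha : chN f 0 (i + 2) = chN f 0 i * (f i * f (i + 1)) := by
    show chN f 0 (i + 1) * f (0 + (i + 1)) = _
    show (chN f 0 i * f (0 + i)) * f (0 + (i + 1)) = _
    rw [zero_add, zero_add, mul_assoc]
  have hb' : f i * chN f (i + 2) (N - (i + 2)) = chN f (i + 2) (N - (i + 2)) * f i := by
    refine chN_comm f (f i) (i + 2) _ (fun m' hm => ?_)
    exact hc2 i (i + 2 + m') (by omega) (by omega)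
  have hcs : chN f 0 i * f (i + 1) = f (i + 1) * chN f 0 i := by
    refine (chN_comm f (f (i + 1)) 0 i (fun m' hm => ?_)).symm
    exact (hc2 (0 + m') (i + 1) (by omega) (by omega)).symm
  calc chN f 0 N * f i
      = chN f 0 (i + 2) * (chN f (i + 2) (N - (i + 2)) * f i) := by rw [hsplit]; group
    _ = chN f 0 (i + 2) * (f i * chN f (i + 2) (N - (i + 2))) := by rw [← hb']
    _ = chN f 0 i * (f i * f (i + 1) * f i) * chN f (i + 2) (N - (i + 2)) := by
        rw [ha]; group
    _ = chN f 0 i * (f (i + 1) * f i * f (i + 1)) * chN f (i + 2) (N - (i + 2)) := by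
        rw [hb2 i hi]
    _ = (chN f 0 i * f (i + 1)) * (f i * f (i + 1)) * chN f (i + 2) (N - (i + 2)) := by
        group
    _ = (f (i + 1) * chN f 0 i) * (f i * f (i + 1)) * chN f (i + 2) (N - (i + 2)) := by
        rw [hcs]
    _ = f (i + 1) * (chN f 0 i * (f i * f (i + 1))) * chN f (i + 2) (N - (i + 2)) := by
        group
    _ = f (i + 1) * chN f 0 N := by rw [← ha, hsplit]; group

lemma Kpow (hc2 : ∀ i j : ℕ, j < N → i + 2 ≤ j → f i * f j = f j * f i)
    (hb2 : ∀ i : ℕ, i + 1 < N → f i * f (i + 1) * f i = f (i + 1) * f i * f (i + 1)) :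
    ∀ i : ℕ, i < N → (chN f 0 N) ^ i * f 0 = f i * (chN f 0 N) ^ i
  | 0, _ => by simp
  | i + 1, h => by
    calc (chN f 0 N) ^ (i + 1) * f 0 = chN f 0 N * ((chN f 0 N) ^ i * f 0) := by
          rw [pow_succ']; group
      _ = chN f 0 N * (f i * (chN f 0 N) ^ i) := by
          rw [Kpow hc2 hb2 i (by omega)]
      _ = (chN f 0 N * f i) * (chN f 0 N) ^ i := by group
      _ = (f (i + 1) * chN f 0 N) * (chN f 0 N) ^ i := by rw [Kshift f N hc2 hb2 i h]
      _ = f (i + 1) * (chN f 0 N) ^ (i + 1) := by rw [pow_succ']; group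

lemma blockK (hc2 : ∀ i j : ℕ, j < N → i + 2 ≤ j → f i * f j = f j * f i)
    (hb2 : ∀ i : ℕ, i + 1 < N → f i * f (i + 1) * f i = f (i + 1) * f i * f (i + 1)) :
    ∀ (a m : ℕ), a + m < N → chN f 0 N * chN f a m = chN f (a + 1) m * chN f 0 N
  | a, 0, _ => by simp [chN]
  | a, m + 1, h => by
    show chN f 0 N * (chN f a m * f (a + m)) = (chN f (a + 1) m * f ((a + 1) + m)) * chN f 0 N
    calc chN f 0 N * (chN f a m * f (a + m))
        = (chN f 0 N * chN f a m) * f (a + m) := by group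
      _ = chN f (a + 1) m * (chN f 0 N * f (a + m)) := by
          rw [blockK hc2 hb2 a m (by omega)]; group
      _ = chN f (a + 1) m * (f (a + m + 1) * chN f 0 N) := by
          rw [Kshift f N hc2 hb2 (a + m) (by omega)]
      _ = (chN f (a + 1) m * f ((a + 1) + m)) * chN f 0 N := by
          rw [show a + m + 1 = (a + 1) + m by omega]; group

lemma powProd (hc2 : ∀ i j : ℕ, j < N → i + 2 ≤ j → f i * f j = f j * f i)
    (hb2 : ∀ i : ℕ, i + 1 < N → f i * f (i + 1) * f i = f (i + 1) * f i * f (i + 1)) :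
    ∀ k : ℕ, k < N → (chN f 0 N * f 0) ^ k = chN f 1 k * (chN f 0 N) ^ k
  | 0, _ => by simp [chN]
  | k + 1, h => by
    calc (chN f 0 N * f 0) ^ (k + 1)
        = (chN f 0 N * f 0) * (chN f 0 N * f 0) ^ k := by rw [pow_succ']
      _ = (chN f 0 N * f 0) * (chN f 1 k * (chN f 0 N) ^ k) := by
          rw [powProd hc2 hb2 k (by omega)]
      _ = chN f 0 N * (f 0 * chN f 1 k) * (chN f 0 N) ^ k := by group
      _ = chN f 0 N * chN f 0 (k + 1) * (chN f 0 N) ^ k := by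
          rw [chN_cons f 0 k, zero_add]
      _ = (chN f 1 (k + 1) * chN f 0 N) * (chN f 0 N) ^ k := by
          rw [blockK f N hc2 hb2 0 (k + 1) (by omega)]
      _ = chN f 1 (k + 1) * (chN f 0 N) ^ (k + 1) := by rw [pow_succ']; group

lemma fulltwist (hc2 : ∀ i j : ℕ, j < N → i + 2 ≤ j → f i * f j = f j * f i)
    (hb2 : ∀ i : ℕ, i + 1 < N → f i * f (i + 1) * f i = f (i + 1) * f i * f (i + 1))
    (hN : 1 ≤ N) :
    (chN f 0 N * f 0) ^ N = (chN f 0 N) ^ (N + 1) := by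
  have h1 : (chN f 0 N * f 0) ^ N = (chN f 0 N * f 0) * (chN f 0 N * f 0) ^ (N - 1) := by
    rw [← pow_succ', show N - 1 + 1 = N by omega]
  rw [h1, powProd f N hc2 hb2 (N - 1) (by omega)]
  have h2 : f 0 * chN f 1 (N - 1) = chN f 0 N := by
    rw [show N = (N - 1) + 1 by omega, chN_cons f 0 (N - 1), zero_add,
      show N - 1 + 1 - 1 = N - 1 by omega]
  calc (chN f 0 N * f 0) * (chN f 1 (N - 1) * (chN f 0 N) ^ (N - 1))
      = chN f 0 N * (f 0 * chN f 1 (N - 1)) * (chN f 0 N) ^ (N - 1) := by group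
    _ = chN f 0 N * chN f 0 N * (chN f 0 N) ^ (N - 1) := by rw [h2]
    _ = (chN f 0 N) ^ (N + 1) := by
        rw [show N + 1 = 1 + 1 + (N - 1) by omega, pow_add, pow_add, pow_one]

end Theory2

/-! ### Bridging lemmas for presented groups -/

lemma mk_rel_eq_one {α : Type*} {rels : Set (FreeGroup α)} {r : FreeGroup α} (h : r ∈ rels) :
    PresentedGroup.mk rels r = 1 :=
  (QuotientGroup.eq_one_iff r).mpr (Subgroup.subset_normalClosure h)

lemma ofFn_prod (f : ℕ → G) :
    ∀ m : ℕ, (List.ofFn fun i : Fin m => f i.val).prod = chN f 0 m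
  | 0 => by simp [chN]
  | m + 1 => by
    rw [List.ofFn_succ', List.concat_eq_append, List.prod_append]
    show (List.ofFn fun i : Fin m => f i.val).prod * _ = chN f 0 m * f (0 + m)
    rw [ofFn_prod f m]
    simp [Fin.last]

lemma tE_map {H : Type*} [Group H] (h : G →* H) (s a : G) (k : ℤ) :
    h (tE s a k) = tE (h s) (h a) k := by
  simp [tE, _root_.map_mul, _root_.map_zpow]

section DSide

variable (n : ℕ)

noncomputable def ggen (m : ℕ) : BraidGroupD n :=
  if h : m < n - 1 then PresentedGroup.of (DGen.sig ⟨m, h⟩) else 1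

noncomputable def rhoD : BraidGroupD n := PresentedGroup.of DGen.rho

lemma gg_comm (i j : ℕ) (hj : j < n - 1) (hij : i + 2 ≤ j) :
    ggen n i * ggen n j = ggen n j * ggen n i := by
  have hi : i < n - 1 := by omega
  have h := mk_rel_eq_one (rels := typeDRels n)
    (Or.inl ⟨⟨i, hi⟩, ⟨j, hj⟩, Or.inl (by simp; omega), rfl⟩)
  simp only [_root_.map_mul, _root_.map_inv, mul_inv_eq_one] at h
  rw [show ggen n i = PresentedGroup.of (DGen.sig ⟨i, hi⟩) from dif_pos hi, show ggen n j = PresentedGroup.of (DGen.sig ⟨j, hj⟩) from dif_pos hj]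
  exact h

lemma gg_braid (i : ℕ) (hi : i + 1 < n - 1) :
    ggen n i * ggen n (i + 1) * ggen n i = ggen n (i + 1) * ggen n i * ggen n (i + 1) := by
  have hi' : i < n - 1 := by omega
  have h := mk_rel_eq_one (rels := typeDRels n)
    (Or.inr (Or.inl ⟨⟨i, hi'⟩, ⟨i + 1, hi⟩, rfl, rfl⟩))
  simp only [_root_.map_mul, _root_.map_inv, mul_inv_eq_one] at h
  rw [show ggen n i = PresentedGroup.of (DGen.sig ⟨i, hi'⟩) from dif_pos hi', show ggen n (i + 1) = PresentedGroup.of (DGen.sig ⟨(i + 1), hi⟩) from dif_pos hi]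
  exact h

lemma gg_rho_comm (i : ℕ) (hi : i < n - 1) (h1 : i ≠ 1) :
    rhoD n * ggen n i = ggen n i * rhoD n := by
  have h := mk_rel_eq_one (rels := typeDRels n)
    (Or.inr (Or.inr (Or.inl ⟨⟨i, hi⟩, h1, rfl⟩)))
  simp only [_root_.map_mul, _root_.map_inv, mul_inv_eq_one] at h
  rw [show ggen n i = PresentedGroup.of (DGen.sig ⟨i, hi⟩) from dif_pos hi]
  exact h

lemma gg_rho_braid (h1 : 1 < n - 1) :
    rhoD n * ggen n 1 * rhoD n = ggen n 1 * rhoD n * ggen n 1 := by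
  have h := mk_rel_eq_one (rels := typeDRels n)
    (Or.inr (Or.inr (Or.inr ⟨h1, rfl⟩)))
  simp only [_root_.map_mul, _root_.map_inv, mul_inv_eq_one] at h
  rw [show ggen n 1 = PresentedGroup.of (DGen.sig ⟨1, h1⟩) from dif_pos h1]
  exact h

end DSide

section ThreeSide

variable (n : ℕ)

local notation "SS" => (PresentedGroup.of (rels := threeGenDRels n) ThreeGenD.s)
local notation "AA" => (PresentedGroup.of (rels := threeGenDRels n) ThreeGenD.s1)
local notation "RO" => (PresentedGroup.of (rels := threeGenDRels n) ThreeGenD.r)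

lemma rel2 : SS ^ n = (SS * AA) ^ (n - 1) := by
  have h := mk_rel_eq_one (rels := threeGenDRels n) (Or.inr (Or.inl rfl))
  simp only [_root_.map_mul, _root_.map_inv, _root_.map_pow, mul_inv_eq_one] at h
  exact h

lemma rel1 (i : ℕ) (h2 : 2 ≤ i) (h2n : 2 * i ≤ n) :
    AA * tE SS AA (i : ℤ) = tE SS AA (i : ℤ) * AA := by
  have h := mk_rel_eq_one (rels := threeGenDRels n) (Or.inl ⟨i, h2, h2n, rfl⟩)
  simp only [_root_.map_mul, _root_.map_inv, _root_.map_pow, mul_inv_eq_one] at h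
  rw [tE_natCast]
  calc AA * (SS ^ i * AA * (SS ^ i)⁻¹) = AA * SS ^ i * AA * (SS ^ i)⁻¹ := by group
    _ = SS ^ i * AA * (SS ^ i)⁻¹ * AA := h

lemma rel3 (i : ℕ) (hi : i = 0 ∨ (2 ≤ i ∧ i ≤ n - 2)) :
    RO * tE SS AA (i : ℤ) = tE SS AA (i : ℤ) * RO := by
  have h := mk_rel_eq_one (rels := threeGenDRels n) (Or.inr (Or.inr (Or.inl ⟨i, hi, rfl⟩)))
  simp only [_root_.map_mul, _root_.map_inv, _root_.map_pow, mul_inv_eq_one] at h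
  rw [tE_natCast]
  calc RO * (SS ^ i * AA * (SS ^ i)⁻¹) = RO * SS ^ i * AA * (SS ^ i)⁻¹ := by group
    _ = SS ^ i * AA * (SS ^ i)⁻¹ * RO := h

lemma rel4 : RO * tE SS AA 1 * RO = tE SS AA 1 * RO * tE SS AA 1 := by
  have h := mk_rel_eq_one (rels := threeGenDRels n) (Or.inr (Or.inr (Or.inr rfl)))
  simp only [_root_.map_mul, _root_.map_inv, mul_inv_eq_one] at h
  have he : tE SS AA (1 : ℤ) = SS * AA * SS⁻¹ := by
    rw [show (1 : ℤ) = ((1 : ℕ) : ℤ) by norm_num, tE_natCast, pow_one]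
  rw [he]
  exact h

end ThreeSide

/-! ### The two homomorphisms -/

section Phi

variable (n : ℕ) (gg : ℕ → G) (rr : G)

def phiF : ThreeGenD → G
  | .s1 => gg 0
  | .s => chN gg 0 (n - 1)
  | .r => rr

lemma phi_rels (hn : 4 ≤ n)
    (hc2 : ∀ i j : ℕ, j < n - 1 → i + 2 ≤ j → gg i * gg j = gg j * gg i)
    (hb2 : ∀ i : ℕ, i + 1 < n - 1 → gg i * gg (i + 1) * gg i = gg (i + 1) * gg i * gg (i + 1))
    (hrc : ∀ i : ℕ, i < n - 1 → i ≠ 1 → rr * gg i = gg i * rr)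
    (hrb : rr * gg 1 * rr = gg 1 * rr * gg 1) :
    ∀ x ∈ threeGenDRels n, FreeGroup.lift (phiF n gg rr) x = 1 := by
  intro x hx
  set D := chN gg 0 (n - 1) with hD
  have hE : ∀ i : ℕ, i < n - 1 → D ^ i * gg 0 * (D ^ i)⁻¹ = gg i := by
    intro i hi
    rw [hD, Kpow gg (n - 1) hc2 hb2 i hi]
    group
  rcases hx with ⟨i, h2, h2n, rfl⟩ | rfl | ⟨i, hi, rfl⟩ | rfl
  · simp only [_root_.map_mul, _root_.map_inv, _root_.map_pow, FreeGroup.lift_apply_of,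
      phiF, mul_inv_eq_one, ← hD]
    rw [show gg 0 * D ^ i * gg 0 * (D ^ i)⁻¹ = gg 0 * (D ^ i * gg 0 * (D ^ i)⁻¹) by group,
      hE i (by omega)]
    exact hc2 0 i (by omega) (by omega)
  · simp only [_root_.map_mul, _root_.map_inv, _root_.map_pow, FreeGroup.lift_apply_of,
      phiF, mul_inv_eq_one, ← hD]
    rw [show n = (n - 1) + 1 by omega, Nat.add_sub_cancel, hD,
      fulltwist gg (n - 1) hc2 hb2 (by omega)]
  · simp only [_root_.map_mul, _root_.map_inv, _root_.map_pow, FreeGroup.lift_apply_of,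
      phiF, mul_inv_eq_one, ← hD]
    rw [show rr * D ^ i * gg 0 * (D ^ i)⁻¹ = rr * (D ^ i * gg 0 * (D ^ i)⁻¹) by group,
      hE i (by omega)]
    exact hrc i (by omega) (by omega)
  · simp only [_root_.map_mul, _root_.map_inv, _root_.map_pow, FreeGroup.lift_apply_of,
      phiF, mul_inv_eq_one, ← hD]
    have h1 : D * gg 0 * D⁻¹ = gg 1 := by
      have h := hE 1 (by omega); rwa [pow_one] at h
    rw [h1]
    exact hrb

end Phi

section Psi

variable (n : ℕ) (s a r : G)

def psiF : DGen n → G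
  | .sig i => tE s a i.val
  | .rho => r

lemma psi_rels (hn : 4 ≤ n) (ht : s ^ n = (s * a) ^ (n - 1))
    (hc : ∀ i : ℕ, 2 ≤ i → 2 * i ≤ n → a * tE s a i = tE s a i * a)
    (hr3 : ∀ i : ℕ, (i = 0 ∨ (2 ≤ i ∧ i ≤ n - 2)) → r * tE s a i = tE s a i * r)
    (hr4 : r * tE s a 1 * r = tE s a 1 * r * tE s a 1) :
    ∀ x ∈ typeDRels n, FreeGroup.lift (psiF n s a r) x = 1 := by
  have key : ∀ p q : ℕ, p + 2 ≤ q → q < n - 1 →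
      tE s a p * tE s a q = tE s a q * tE s a p := by
    intro p q h2 hq
    have h := commCfull n s a hn ht hc (p : ℤ) (q - p) (by omega) (by omega)
    rwa [show (p : ℤ) + ((q - p : ℕ) : ℤ) = (q : ℤ) by
      rw [Nat.cast_sub (by omega)]; ring] at h
  intro x hx
  rcases hx with ⟨i, j, hij, rfl⟩ | ⟨i, j, hj, rfl⟩ | ⟨i, hi, rfl⟩ | ⟨h1, rfl⟩
  · simp only [_root_.map_mul, _root_.map_inv, FreeGroup.lift_apply_of, psiF, mul_inv_eq_one]
    rcases hij with h | h
    · exact key i.val j.val (by omega) (by omega)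
    · exact (key j.val i.val (by omega) (by omega)).symm
  · simp only [_root_.map_mul, _root_.map_inv, FreeGroup.lift_apply_of, psiF, mul_inv_eq_one]
    rw [show ((j.val : ℕ) : ℤ) = ((i.val : ℕ) : ℤ) + 1 by rw [hj]; push_cast; ring]
    exact braidk n s a hn ht hc i.val
  · simp only [_root_.map_mul, _root_.map_inv, FreeGroup.lift_apply_of, psiF, mul_inv_eq_one]
    exact hr3 i.val (by omega)
  · simp only [_root_.map_mul, _root_.map_inv, FreeGroup.lift_apply_of, psiF, mul_inv_eq_one]
    show r * tE s a ((1 : ℕ) : ℤ) * r = tE s a ((1 : ℕ) : ℤ) * r * tE s a ((1 : ℕ) : ℤ)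
    rw [Nat.cast_one]
    exact hr4

end Psi

end TypeDAux

open TypeDAux in

theorem typeD_three_generator_presentation (n : ℕ) (hn : 4 ≤ n) :
    ∃ e : PresentedGroup (threeGenDRels n) ≃* BraidGroupD n,
      e (PresentedGroup.of ThreeGenD.s1) =
        PresentedGroup.of (DGen.sig ⟨0, by omega⟩) ∧
      e (PresentedGroup.of ThreeGenD.r) = PresentedGroup.of DGen.rho ∧
      e (PresentedGroup.of ThreeGenD.s) =
        (List.ofFn (fun i : Fin (n - 1) =>
          PresentedGroup.of (rels := typeDRels n) (DGen.sig i))).prod := by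
  classical
  -- hypotheses on the D-side generators
  have hc2 : ∀ i j : ℕ, j < n - 1 → i + 2 ≤ j → ggen n i * ggen n j = ggen n j * ggen n i :=
    fun i j hj hij => gg_comm n i j hj hij
  have hb2 : ∀ i : ℕ, i + 1 < n - 1 →
      ggen n i * ggen n (i + 1) * ggen n i = ggen n (i + 1) * ggen n i * ggen n (i + 1) :=
    fun i hi => gg_braid n i hi
  -- the forward homomorphism
  have hφrels := phi_rels n (ggen n) (rhoD n) hn hc2 hb2
    (fun i hi h1 => gg_rho_comm n i hi h1) (gg_rho_braid n (by omega))
  set φ : PresentedGroup (threeGenDRels n) →* BraidGroupD n :=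
    PresentedGroup.toGroup hφrels with hφdef
  -- hypotheses on the three-generator side
  have ht := rel2 n
  have hc : ∀ i : ℕ, 2 ≤ i → 2 * i ≤ n →
      PresentedGroup.of (rels := threeGenDRels n) ThreeGenD.s1 *
        tE (PresentedGroup.of ThreeGenD.s) (PresentedGroup.of ThreeGenD.s1) (i : ℤ) =
      tE (PresentedGroup.of ThreeGenD.s) (PresentedGroup.of ThreeGenD.s1) (i : ℤ) *
        PresentedGroup.of ThreeGenD.s1 :=
    fun i h2 h2n => rel1 n i h2 h2n
  have hψrels := psi_rels n (PresentedGroup.of (rels := threeGenDRels n) ThreeGenD.s)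
    (PresentedGroup.of ThreeGenD.s1) (PresentedGroup.of ThreeGenD.r) hn ht hc
    (fun i hi => rel3 n i hi) (rel4 n)
  set ψ : BraidGroupD n →* PresentedGroup (threeGenDRels n) :=
    PresentedGroup.toGroup hψrels with hψdef
  -- basic computations of the two maps on generators
  have hφs1 : φ (PresentedGroup.of ThreeGenD.s1) = ggen n 0 := PresentedGroup.toGroup.of hφrels
  have hφs : φ (PresentedGroup.of ThreeGenD.s) = chN (ggen n) 0 (n - 1) :=
    PresentedGroup.toGroup.of hφrels
  have hφr : φ (PresentedGroup.of ThreeGenD.r) = rhoD n := PresentedGroup.toGroup.of hφrels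
  have hψsig : ∀ m : ℕ, ∀ hm : m < n - 1,
      ψ (ggen n m) = tE (PresentedGroup.of ThreeGenD.s) (PresentedGroup.of ThreeGenD.s1)
        (m : ℤ) := by
    intro m hm
    rw [show ggen n m = PresentedGroup.of (DGen.sig ⟨m, hm⟩) from dif_pos hm]
    exact PresentedGroup.toGroup.of hψrels
  have hψrho : ψ (rhoD n) = PresentedGroup.of ThreeGenD.r := PresentedGroup.toGroup.of hψrels
  -- compositions are the identity
  have comp1 : ψ.comp φ = MonoidHom.id (PresentedGroup (threeGenDRels n)) := by
    refine PresentedGroup.ext fun x => ?_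
    cases x with
    | s1 =>
      rw [MonoidHom.comp_apply, MonoidHom.id_apply, hφs1, hψsig 0 (by omega)]
      rw [Nat.cast_zero, tE_zero]
    | r =>
      rw [MonoidHom.comp_apply, MonoidHom.id_apply, hφr, hψrho]
    | s =>
      rw [MonoidHom.comp_apply, MonoidHom.id_apply, hφs]
      have hch : ∀ m : ℕ, m ≤ n - 1 → ψ (chN (ggen n) 0 m) =
          chain (PresentedGroup.of ThreeGenD.s) (PresentedGroup.of ThreeGenD.s1) 0 m := by
        intro m
        induction m with
        | zero => intro _; simp [chN, chain]
        | succ m ih =>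
          intro hm
          show ψ (chN (ggen n) 0 m * ggen n (0 + m)) = _
          rw [_root_.map_mul, ih (by omega), zero_add, hψsig m (by omega)]
          show _ = chain _ _ 0 m * tE _ _ ((0 : ℤ) + (m : ℕ))
          rw [zero_add]
      rw [hch (n - 1) le_rfl]
      exact (s_eq_chain0 n _ _ (by omega) ht).symm
  have comp2 : φ.comp ψ = MonoidHom.id (BraidGroupD n) := by
    refine PresentedGroup.ext fun x => ?_
    cases x with
    | rho =>
      show φ (ψ (PresentedGroup.of DGen.rho)) = PresentedGroup.of DGen.rho
      have h1 : ψ (PresentedGroup.of (DGen.rho (n := n))) = PresentedGroup.of ThreeGenD.r :=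
        PresentedGroup.toGroup.of hψrels
      rw [h1, hφr]
      rfl
    | sig i =>
      show φ (ψ (PresentedGroup.of (DGen.sig i))) = PresentedGroup.of (DGen.sig i)
      have h1 : ψ (PresentedGroup.of (DGen.sig i)) =
          tE (PresentedGroup.of ThreeGenD.s) (PresentedGroup.of ThreeGenD.s1) (i.val : ℤ) :=
        PresentedGroup.toGroup.of hψrels
      rw [h1, tE_map, hφs, hφs1, tE_natCast,
        Kpow (ggen n) (n - 1) hc2 hb2 i.val i.isLt, mul_inv_cancel_right,
        show ggen n i.val = PresentedGroup.of (DGen.sig ⟨i.val, i.isLt⟩) from dif_pos i.isLt]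
  refine ⟨MonoidHom.toMulEquiv φ ψ comp1 comp2, ?_, ?_, ?_⟩
  · show φ (PresentedGroup.of ThreeGenD.s1) = _
    rw [hφs1, show ggen n 0 = PresentedGroup.of (DGen.sig ⟨0, (show 0 < n - 1 by omega)⟩) from dif_pos (show 0 < n - 1 by omega)]
  · show φ (PresentedGroup.of ThreeGenD.r) = _
    rw [hφr]
    rfl
  · show φ (PresentedGroup.of ThreeGenD.s) = _
    rw [hφs]
    have hfun : (fun i : Fin (n - 1) =>
        PresentedGroup.of (rels := typeDRels n) (DGen.sig i)) =
        (fun i : Fin (n - 1) => ggen n i.val) := by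
      funext i
      rw [show ggen n i.val = PresentedGroup.of (DGen.sig ⟨i.val, i.isLt⟩) from dif_pos i.isLt]
    rw [hfun]
    exact (ofFn_prod (ggen n) (n - 1)).symm
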